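/- For non-negative integers n < m ≤ N (with n < a ≤ b < m in the ranges), the identity Σ_{a=n+1}^{m} (1/a)·C_N(a,m) = Σ_{b=n}^{m−1} C_N(n,b)·(1/(N−b)) holds, where C_N(n,m) = binom(m,n)/binom(N,n) and m ≤ N−1 (so N−b > 0). -/

import Mathlib

open Finset

lemma lemScalar (n m N : ℕ) (h1 : n ≤ m) (h2 : m < N) :
    ((N-n).choose (N-m) : ℚ) / (N.choose (m+1)) =
      ((m+1 : ℚ) * (m.choose n)) / (((N : ℚ) - m) * (N.choose n)) := by
  obtain ⟨p, rfl⟩ : ∃ p, m = n + p := ⟨m - n, by omega⟩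
  obtain ⟨q, rfl⟩ : ∃ q, N = n + p + q + 1 := ⟨N - (n+p) - 1, by omega⟩
  have e1 : n + p + q + 1 - n = p + q + 1 := by omega
  have e2 : n + p + q + 1 - (n + p) = q + 1 := by omega
  rw [e1, e2]
  have c1 : ((p+q+1).choose (q+1) : ℚ) = (p+q+1).factorial / ((q+1).factorial * p.factorial) := by
    rw [Nat.cast_choose ℚ (by omega)]; norm_num [show p+q+1-(q+1) = p from by omega]
  have c2 : ((n+p+q+1).choose (n+p+1) : ℚ) = (n+p+q+1).factorial / ((n+p+1).factorial * q.factorial) := by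
    rw [Nat.cast_choose ℚ (by omega)]; norm_num [show n+p+q+1-(n+p+1) = q from by omega]
  have c3 : ((n+p).choose n : ℚ) = (n+p).factorial / (n.factorial * p.factorial) := by
    rw [Nat.cast_choose ℚ (by omega)]; norm_num [show n+p-n = p from by omega]
  have c4 : ((n+p+q+1).choose n : ℚ) = (n+p+q+1).factorial / (n.factorial * (p+q+1).factorial) := by
    rw [Nat.cast_choose ℚ (by omega)]; norm_num [show n+p+q+1-n = p+q+1 from by omega]
  have sub : ((n+p+q+1 : ℕ) : ℚ) - ((n+p : ℕ) : ℚ) = (q+1 : ℚ) := by push_cast; ring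
  rw [c1, c2, c3, c4, sub]
  have f1 : ((q+1).factorial : ℚ) = (q+1) * q.factorial := by
    rw [Nat.factorial_succ]; push_cast; ring
  have f2 : ((n+p+1).factorial : ℚ) = (n+p+1) * (n+p).factorial := by
    rw [show n+p+1 = (n+p)+1 from rfl, Nat.factorial_succ]; push_cast; ring
  have nz : ∀ k : ℕ, (k.factorial : ℚ) ≠ 0 := fun k => by positivity
  rw [f1, f2]
  push_cast
  field_simp

lemma lemRatio (a m N : ℕ) (ham : a ≤ m+1) (hmn : m+1 ≤ N) :
    ((m+1).choose a : ℚ) / (N.choose a) =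
      ((N-a).choose (N-(m+1)) : ℚ) / (N.choose (m+1)) := by
  have haN : a ≤ N := by omega
  rw [Nat.cast_choose ℚ ham, Nat.cast_choose ℚ haN,
      Nat.cast_choose ℚ (show N-(m+1) ≤ N-a by omega),
      Nat.cast_choose ℚ hmn,
      show N - a - (N - (m+1)) = m+1-a from by omega]
  have nz : ∀ k : ℕ, (k.factorial : ℚ) ≠ 0 := fun k => by positivity
  field_simp

lemma lemU (n m N : ℕ) (h1 : n ≤ m) (h2 : m < N) :
    ∑ a ∈ Finset.Icc (n+1) (m+1), ((m+1).choose a : ℚ) / (N.choose a) =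
      ((m+1 : ℚ) * (m.choose n)) / (((N : ℚ) - m) * (N.choose n)) := by
  rw [Finset.sum_congr rfl (fun a ha => by
    simp only [mem_Icc] at ha
    exact lemRatio a m N ha.2 (by omega))]
  rw [← Finset.sum_div]
  have hre : ∑ a ∈ Finset.Icc (n+1) (m+1), ((N-a).choose (N-(m+1)) : ℚ) =
      ∑ i ∈ Finset.Icc (N-(m+1)) (N-(n+1)), (i.choose (N-(m+1)) : ℚ) := by
    apply Finset.sum_nbij' (fun a => N - a) (fun i => N - i)
    · intro a ha; simp only [mem_Icc] at *; omega
    · intro i hi; simp only [mem_Icc] at *; omega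
    · intro a ha; simp only [mem_Icc] at ha; omega
    · intro i hi; simp only [mem_Icc] at hi; omega
    · intro a ha; rfl
  rw [hre]
  have hs : ∑ i ∈ Finset.Icc (N-(m+1)) (N-(n+1)), (i.choose (N-(m+1)) : ℚ)
      = (((N-n).choose (N-m) : ℕ) : ℚ) := by
    rw [← Nat.cast_sum]
    norm_cast
    rw [Nat.sum_Icc_choose]
    congr 1 <;> omega
  rw [hs]
  exact lemScalar n m N h1 h2

/-- For `0 ≤ n < m < N`:
`Σ_{a=n+1}^{m} (1/a)·C_N(a,m) = Σ_{b=n}^{m−1} C_N(n,b)·(1/(N−b))`,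
where `C_N(n,m) = binom(m,n)/binom(N,n)`. -/
theorem stmt_2 (n m N : ℕ) (hnm : n < m) (hmN : m < N) :
    ∑ a ∈ Finset.Icc (n + 1) m, (1 / (a : ℚ)) * ((m.choose a : ℚ) / (N.choose a : ℚ)) =
    ∑ b ∈ Finset.Icc n (m - 1),
      ((b.choose n : ℚ) / (N.choose n : ℚ)) * (1 / ((N : ℚ) - (b : ℚ))) := by
  induction m, hnm using Nat.le_induction with
  | base =>
    rw [show n + 1 - 1 = n from rfl]
    rw [Finset.Icc_self, Finset.sum_singleton, Finset.Icc_self, Finset.sum_singleton]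
    rw [Nat.choose_self, Nat.choose_self]
    have hc : N.choose (n+1) * (n+1) = N.choose n * (N-n) := Nat.choose_succ_right_eq N n
    have hq : ((N.choose (n+1) : ℚ)) * ((n : ℚ)+1) = (N.choose n : ℚ) * ((N : ℚ) - n) := by
      have h2 : ((N.choose (n+1) * (n+1) : ℕ) : ℚ) = ((N.choose n * (N-n) : ℕ) : ℚ) := by
        exact_mod_cast congrArg (fun x : ℕ => (x : ℚ)) hc
      push_cast [Nat.cast_sub (show n ≤ N by omega)] at h2
      linarith
    have hC1 : ((N.choose (n+1) : ℕ) : ℚ) ≠ 0 :=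
      Nat.cast_ne_zero.mpr (Nat.choose_pos (by omega)).ne'
    have hC2 : ((N.choose n : ℕ) : ℚ) ≠ 0 :=
      Nat.cast_ne_zero.mpr (Nat.choose_pos (by omega)).ne'
    have hn1 : ((n : ℚ) + 1) ≠ 0 := by positivity
    have hNn : ((N : ℚ) - n) ≠ 0 := by
      have : (n : ℚ) < N := by exact_mod_cast (show n < N by omega)
      linarith
    push_cast
    field_simp
    linear_combination -hq
  | succ m hm ih =>
    rw [show m + 1 - 1 = m from rfl]
    have hmN' : m < N := by omega
    have hIH := ih hmN'
    have hexp : ∀ a ∈ Finset.Icc (n+1) (m+1),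
        (1 / (a : ℚ)) * (((m+1).choose a : ℚ) / (N.choose a : ℚ)) =
          (1 / (a : ℚ)) * ((m.choose a : ℚ) / (N.choose a : ℚ))
            + (1 / ((m : ℚ)+1)) * (((m+1).choose a : ℚ) / (N.choose a : ℚ)) := by
      intro a ha
      simp only [Finset.mem_Icc] at ha
      obtain ⟨b, rfl⟩ : ∃ b, a = b + 1 := ⟨a - 1, by omega⟩
      have hC : ((N.choose (b+1) : ℕ) : ℚ) ≠ 0 :=
        Nat.cast_ne_zero.mpr (Nat.choose_pos (by omega)).ne'
      have hmul : ((m : ℚ)+1) * (m.choose b : ℚ) = ((m+1).choose (b+1) : ℚ) * ((b : ℚ)+1) := by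
        have h3 := Nat.add_one_mul_choose_eq m b
        have h4 : ((Nat.succ m * m.choose b : ℕ) : ℚ)
            = (((m+1).choose (b+1) * (b+1) : ℕ) : ℚ) := by exact_mod_cast congrArg (fun x : ℕ => (x : ℚ)) h3
        push_cast at h4
        linarith
      have hpascal : ((m+1).choose (b+1) : ℚ) = (m.choose b : ℚ) + (m.choose (b+1) : ℚ) := by
        rw [Nat.choose_succ_succ]; push_cast; ring
      have key : (1 / ((m : ℚ)+1)) * (((m+1).choose (b+1) : ℚ) / (N.choose (b+1) : ℚ))
          = (1 / ((b : ℚ)+1)) * ((m.choose b : ℚ) / (N.choose (b+1) : ℚ)) := by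
        have hm1 : ((m : ℚ)+1) ≠ 0 := by positivity
        have hb1 : ((b : ℚ)+1) ≠ 0 := by positivity
        field_simp
        linarith [hmul]
      push_cast
      rw [key]
      push_cast [hpascal]
      ring
    rw [Finset.sum_congr rfl hexp, Finset.sum_add_distrib]
    have h1 : ∑ a ∈ Finset.Icc (n+1) (m+1), (1 / (a : ℚ)) * ((m.choose a : ℚ) / (N.choose a : ℚ))
        = ∑ a ∈ Finset.Icc (n+1) m, (1 / (a : ℚ)) * ((m.choose a : ℚ) / (N.choose a : ℚ)) := by
      rw [Finset.sum_Icc_succ_top (show n+1 ≤ m+1 by omega)]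
      simp [Nat.choose_succ_self]
    have h2 : ∑ a ∈ Finset.Icc (n+1) (m+1), (1 / ((m : ℚ)+1)) * (((m+1).choose a : ℚ) / (N.choose a : ℚ))
        = (m.choose n : ℚ) / (N.choose n : ℚ) * (1 / ((N : ℚ) - m)) := by
      rw [← Finset.mul_sum, lemU n m N (by omega) hmN']
      have hNm : ((N : ℚ) - m) ≠ 0 := by
        have : (m : ℚ) < N := by exact_mod_cast hmN'
        linarith
      have hC : ((N.choose n : ℕ) : ℚ) ≠ 0 :=
        Nat.cast_ne_zero.mpr (Nat.choose_pos (by omega)).ne'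
      have hm1 : ((m : ℚ)+1) ≠ 0 := by positivity
      field_simp
    rw [h1, h2, hIH]
    have hsplit : ∑ b ∈ Finset.Icc n m,
        ((b.choose n : ℚ) / (N.choose n : ℚ)) * (1 / ((N : ℚ) - (b : ℚ)))
        = ∑ b ∈ Finset.Icc n (m-1),
            ((b.choose n : ℚ) / (N.choose n : ℚ)) * (1 / ((N : ℚ) - (b : ℚ)))
          + ((m.choose n : ℚ) / (N.choose n : ℚ)) * (1 / ((N : ℚ) - (m : ℚ))) := by
      conv_lhs => rw [show m = (m-1)+1 from by omega]
      rw [Finset.sum_Icc_succ_top (show n ≤ (m-1)+1 by omega)]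
      rw [show (m-1)+1 = m from by omega]
    rw [hsplit]
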